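/- Let E be a finite-dimensional real inner product space, f : E → ℝ differentiable, g : E → ℝ twice continuously differentiable, and λ > 0. Suppose p : E → E is differentiable and for every x ∈ E the point p(x) minimizes θ ↦ f(θ) + λ D_g(θ, x) and satisfies the first-order optimality condition ∇f(p(x)) + λ(∇g(p(x)) − ∇g(x)) = 0. Define the Bregman–Moreau envelope e(x) := f(p(x)) + λ D_g(p(x), x). Then e is differentiable and for every x ∈ E, ∇e(x) = λ ∇²g(x)(x − p(x)), where ∇²g(x) denotes the Hessian of g at x viewed as a linear operator on E. -/

import Mathlib

open RealInnerProductSpace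

/-- Bregman divergence of a differentiable function `g`. -/
noncomputable def bregman {E : Type*} [NormedAddCommGroup E] [InnerProductSpace ℝ E]
    [CompleteSpace E] (g : E → ℝ) (x y : E) : ℝ :=
  g x - g y - ⟪gradient g y, x - y⟫

/-- Gradient of the Bregman–Moreau envelope:
`∇ Denv_{g,λ⁻¹} f (x) = λ ∇²g(x) (x − Dprox_{g,λ⁻¹} f (x))`. -/
theorem gradient_bregman_moreau_envelope
    {E : Type*} [NormedAddCommGroup E] [InnerProductSpace ℝ E] [FiniteDimensional ℝ E]
    (f g : E → ℝ) (hf : Differentiable ℝ f) (hg : ContDiff ℝ 2 g)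
    (lam : ℝ) (hlam : 0 < lam)
    (p : E → E) (hp : Differentiable ℝ p)
    (hmin : ∀ x θ : E, f (p x) + lam * bregman g (p x) x ≤ f θ + lam * bregman g θ x)
    (hfoc : ∀ x : E, gradient f (p x) + lam • (gradient g (p x) - gradient g x) = 0) :
    Differentiable ℝ (fun x => f (p x) + lam * bregman g (p x) x) ∧
    ∀ x : E, gradient (fun x => f (p x) + lam * bregman g (p x) x) x
      = lam • (fderiv ℝ (gradient g) x) (x - p x) := by
  classical
  -- gradient g is differentiable
  have hgeq : gradient g = fun y => (InnerProductSpace.toDual ℝ E).symm (fderiv ℝ g y) := rfl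
  have hg1 : ContDiff ℝ 1 (fderiv ℝ g) := hg.fderiv_right (by norm_num)
  have hdg : Differentiable ℝ (gradient g) := by
    rw [hgeq]
    exact (InnerProductSpace.toDual ℝ E).symm.toContinuousLinearEquiv.differentiable.comp
      (hg1.differentiable one_ne_zero)
  have hdgg : Differentiable ℝ g := hg.differentiable two_ne_zero
  -- inner with gradient = fderiv
  have hinner : ∀ (h : E → ℝ) (y v : E), ⟪gradient h y, v⟫ = fderiv ℝ h y v := by
    intro h y v
    rw [gradient, InnerProductSpace.toDual_symm_apply]
  -- symmetry of the Hessian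
  have hsymm : ∀ x v w : E, ⟪(fderiv ℝ (gradient g) x) v, w⟫ = ⟪(fderiv ℝ (gradient g) x) w, v⟫ := by
    intro x v w
    have hS : IsSymmSndFDerivAt ℝ g x := hg.contDiffAt.isSymmSndFDerivAt (by norm_num)
    have hkey : ∀ u z : E, ⟪(fderiv ℝ (gradient g) x) u, z⟫ = fderiv ℝ (fderiv ℝ g) x u z := by
      intro u z
      have : fderiv ℝ (gradient g) x =
          ((InnerProductSpace.toDual ℝ E).symm.toContinuousLinearEquiv : (E →L[ℝ] ℝ) ≃L[ℝ] E).toContinuousLinearMap.comp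
            (fderiv ℝ (fderiv ℝ g) x) := by
        rw [hgeq]
        exact (InnerProductSpace.toDual ℝ E).symm.toContinuousLinearEquiv.comp_fderiv
      rw [this]
      simp [InnerProductSpace.toDual_symm_apply]
    rw [hkey, hkey, hS v w]
  have hfd : ∀ x w : E, fderiv ℝ f (p x) w = -lam * (fderiv ℝ g (p x) w - fderiv ℝ g x w) := by
    intro x w
    have h0 : gradient f (p x) = -(lam • (gradient g (p x) - gradient g x)) :=
      eq_neg_of_add_eq_zero_left (hfoc x)
    calc fderiv ℝ f (p x) w = ⟪gradient f (p x), w⟫ := (hinner f (p x) w).symm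
      _ = ⟪-(lam • (gradient g (p x) - gradient g x)), w⟫ := by rw [h0]
      _ = -lam * (fderiv ℝ g (p x) w - fderiv ℝ g x w) := by
          rw [inner_neg_left, real_inner_smul_left, inner_sub_left, hinner, hinner]; ring
  have key : ∀ x : E, HasGradientAt (fun y => f (p y) + lam * bregman g (p y) y)
      (lam • (fderiv ℝ (gradient g) x) (x - p x)) x := by
    intro x
    set P := fderiv ℝ p x with hP
    set H := fderiv ℝ (gradient g) x with hH
    have hpx : HasFDerivAt p P x := (hp x).hasFDerivAt
    have h1 : HasFDerivAt (fun y => f (p y)) ((fderiv ℝ f (p x)).comp P) x :=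
      (hf (p x)).hasFDerivAt.comp x hpx
    have h2 : HasFDerivAt (fun y => g (p y)) ((fderiv ℝ g (p x)).comp P) x :=
      (hdgg (p x)).hasFDerivAt.comp x hpx
    have h3 : HasFDerivAt g (fderiv ℝ g x) x := (hdgg x).hasFDerivAt
    have h4g : HasFDerivAt (gradient g) H x := (hdg x).hasFDerivAt
    have h5 : HasFDerivAt (fun y => p y - y) (P - ContinuousLinearMap.id ℝ E) x :=
      hpx.sub (hasFDerivAt_id x)
    have h4 : HasFDerivAt (fun y => ⟪gradient g y, p y - y⟫)
        ((fderivInnerCLM ℝ (gradient g x, p x - x)).comp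
          (H.prod (P - ContinuousLinearMap.id ℝ E))) x := h4g.inner ℝ h5
    have hB : HasFDerivAt (fun y => bregman g (p y) y)
        ((((fderiv ℝ g (p x)).comp P - fderiv ℝ g x)) -
          (fderivInnerCLM ℝ (gradient g x, p x - x)).comp
            (H.prod (P - ContinuousLinearMap.id ℝ E))) x := (h2.sub h3).sub h4
    have hE : HasFDerivAt (fun y => f (p y) + lam * bregman g (p y) y)
        ((fderiv ℝ f (p x)).comp P + lam • ((((fderiv ℝ g (p x)).comp P - fderiv ℝ g x)) -
          (fderivInnerCLM ℝ (gradient g x, p x - x)).comp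
            (H.prod (P - ContinuousLinearMap.id ℝ E)))) x := h1.add (hB.const_mul lam)
    rw [hasGradientAt_iff_hasFDerivAt]
    have hDeq : ((fderiv ℝ f (p x)).comp P + lam • ((((fderiv ℝ g (p x)).comp P - fderiv ℝ g x)) -
          (fderivInnerCLM ℝ (gradient g x, p x - x)).comp
            (H.prod (P - ContinuousLinearMap.id ℝ E))))
        = (InnerProductSpace.toDual ℝ E) (lam • H (x - p x)) := by
      apply ContinuousLinearMap.ext; intro v
      simp only [ContinuousLinearMap.add_apply, ContinuousLinearMap.coe_comp',
        Function.comp_apply, ContinuousLinearMap.coe_smul', Pi.smul_apply,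
        ContinuousLinearMap.coe_sub', Pi.sub_apply, fderivInnerCLM_apply,
        ContinuousLinearMap.prod_apply, ContinuousLinearMap.coe_id', id_eq,
        InnerProductSpace.toDual_apply_apply, smul_eq_mul]
      rw [hfd, real_inner_smul_left, hsymm x (x - p x) v]
      simp only [inner_sub_right, ← hinner g x]
      ring
    rw [← hDeq]
    exact hE
  constructor
  · intro x
    exact ((key x).hasFDerivAt).differentiableAt
  · intro x
    exact (key x).gradient
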